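/- Fix a prime P, a seed vector b ∈ [P]^d, a mapping m : [d] → {0,1}^{r+1}, and a binary vector q ∈ {0,1}^d. Let q̃_i = q_i b_i, let t ∈ ℤ^{2^{r+1}} be defined by t_j = Σ_{i : m(i) = j} q̃_i, and let H be the 2^{r+1} × 2^{r+1} ±1 Hadamard matrix with H_{v,j} = (-1)^{⟨j,v⟩}. Then for every v ∈ {0,1}^{r+1}, the universal-hash value Σ_{i=1}^d b_i · (g_v ∧ q)_i equals ½(Σ_i q̃_i − (H t)_v), where (g_v)_i = ⟨m(i), v⟩ mod 2. -/

import Mathlib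

lemma stmt10_point (x y : ZMod 2) (c : ℚ) :
    c * ((x * y : ZMod 2).val : ℚ)
      = ((y.val : ℚ) * c - (-1 : ℚ) ^ x.val * ((y.val : ℚ) * c)) / 2 := by
  rw [ZMod.val_mul]
  have hx : x.val < 2 := ZMod.val_lt x
  have hy : y.val < 2 := ZMod.val_lt y
  interval_cases x.val <;> interval_cases y.val <;>
    norm_num [ZMod.val_one]

/-- The FHT-based computation produces the same integer hash values as applying the
universal hash `p(x) = Σ b_i x_i` to each binary hash value `g_v ∧ q`:
`Σ_i b_i (g_v ∧ q)_i = ½(Σ_i q̃_i − (H t)_v)`, where `q̃_i = q_i b_i` and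
`t_j = Σ_{i : m(i)=j} q̃_i`. -/
theorem stmt10 (d r P : ℕ) (hP : P.Prime) (b : Fin d → ℕ) (hb : ∀ i, b i < P)
    (m : Fin d → Fin (r + 1) → ZMod 2) (q : Fin d → ZMod 2)
    (v : Fin (r + 1) → ZMod 2) :
    (∑ i, (b i : ℚ) * (((∑ j, m i j * v j) * q i : ZMod 2).val : ℚ))
      = ((∑ i, ((q i).val : ℚ) * (b i : ℚ))
          - ∑ a : Fin (r + 1) → ZMod 2,
              (-1 : ℚ) ^ ((∑ j, a j * v j : ZMod 2).val)
                * (∑ i ∈ Finset.univ.filter (fun i => m i = a),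
                    ((q i).val : ℚ) * (b i : ℚ))) / 2 := by
  have key : ∑ a : Fin (r + 1) → ZMod 2,
      (-1 : ℚ) ^ ((∑ j, a j * v j : ZMod 2).val)
        * (∑ i ∈ Finset.univ.filter (fun i => m i = a),
            ((q i).val : ℚ) * (b i : ℚ))
      = ∑ i, (-1 : ℚ) ^ ((∑ j, m i j * v j : ZMod 2).val)
          * (((q i).val : ℚ) * (b i : ℚ)) := by
    rw [← Finset.sum_fiberwise (g := m)
      (f := fun i => (-1 : ℚ) ^ ((∑ j, m i j * v j : ZMod 2).val)
          * (((q i).val : ℚ) * (b i : ℚ)))]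
    refine Finset.sum_congr rfl fun a _ => ?_
    rw [Finset.mul_sum]
    refine Finset.sum_congr rfl fun i hi => ?_
    rw [Finset.mem_filter] at hi
    rw [hi.2]
  rw [key, ← Finset.sum_sub_distrib, Finset.sum_div]
  exact Finset.sum_congr rfl fun i _ => stmt10_point _ _ _
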